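/- Let G = (V,E) be a finite simple graph with |V| = n ≥ 1, and let G' be the graph on the disjoint union V ⊎ W, where |W| = n, whose edges are exactly all pairs of distinct nodes of V ⊎ W that do not belong to E. Then the edge expansion of G' equals h(G') = n − (max{|δ_G(S)| : S ⊆ V})/n, i.e., computing h(G') is equivalent to computing a maximum cut in G. -/

import Mathlib

open scoped Classical

noncomputable section

/-- The number of edges of `G` leaving the set `S`, counted as ordered pairs
`(u, v)` with `u ∈ S`, `v ∉ S` and `u ~ v` (each cut edge is counted once). -/
def cutCard {V : Type*} [Fintype V] (G : SimpleGraph V) (S : Set V) : ℕ :=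
  {p : V × V | p.1 ∈ S ∧ p.2 ∉ S ∧ G.Adj p.1 p.2}.ncard

/-- The edge expansion `h(G)` of a finite graph: the infimum of `|δ(S)|/|S|`
over all nonempty `S` with `|S| ≤ |V|/2`. -/
noncomputable def edgeExpansion {V : Type*} [Fintype V] (G : SimpleGraph V) : ℝ :=
  sInf { r : ℝ | ∃ S : Set V, S.Nonempty ∧ 2 * S.ncard ≤ Fintype.card V ∧
    r = (cutCard G S : ℝ) / (S.ncard : ℝ) }
/-- The graph `G'` on the disjoint union `V ⊎ W`, whose edges are exactly all
pairs of distinct nodes that do not form an edge of `G` (inside the copy of `V`). -/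
def compJoinGraph {V W : Type*} (G : SimpleGraph V) : SimpleGraph (V ⊕ W) where
  Adj a b := a ≠ b ∧ ¬ ∃ u v, a = Sum.inl u ∧ b = Sum.inl v ∧ G.Adj u v
  symm := by
    constructor
    rintro a b ⟨h1, h2⟩
    refine ⟨h1.symm, ?_⟩
    rintro ⟨u, v, ha, hb, hadj⟩
    exact h2 ⟨v, u, hb, ha, hadj.symm⟩
  loopless := ⟨fun a h => h.1 rfl⟩

lemma ncard_prod' {α β : Type*} (s : Set α) (t : Set β) :
    (s ×ˢ t).ncard = s.ncard * t.ncard := by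
  rw [← Nat.card_coe_set_eq, ← Nat.card_coe_set_eq, ← Nat.card_coe_set_eq,
    Nat.card_congr (Equiv.Set.prod s t), Nat.card_prod]

lemma cutCard_le {V : Type*} [Fintype V] (G : SimpleGraph V) (S : Set V) :
    cutCard G S ≤ S.ncard * Fintype.card V := by
  have h : {p : V × V | p.1 ∈ S ∧ p.2 ∉ S ∧ G.Adj p.1 p.2} ⊆ S ×ˢ (Set.univ : Set V) := by
    rintro ⟨a, b⟩ ⟨h1, _, _⟩; exact ⟨h1, trivial⟩
  calc cutCard G S ≤ (S ×ˢ (Set.univ : Set V)).ncard := Set.ncard_le_ncard h (Set.toFinite _)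
    _ = S.ncard * Fintype.card V := by
        rw [ncard_prod', Set.ncard_univ, Nat.card_eq_fintype_card]

lemma cut_identity {V W : Type*} [Fintype V] [Fintype W] (G : SimpleGraph V)
    (S : Set (V ⊕ W)) :
    cutCard (compJoinGraph G : SimpleGraph (V ⊕ W)) S + cutCard G (Sum.inl ⁻¹' S)
      = S.ncard * Sᶜ.ncard := by
  classical
  set T := Sum.inl ⁻¹' S with hT
  set G' := (compJoinGraph G : SimpleGraph (V ⊕ W))
  set A := {p : (V ⊕ W) × (V ⊕ W) | p.1 ∈ S ∧ p.2 ∉ S ∧ G'.Adj p.1 p.2} with hA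
  set B := (Prod.map (Sum.inl : V → V ⊕ W) (Sum.inl : V → V ⊕ W)) ''
      {p : V × V | p.1 ∈ T ∧ p.2 ∉ T ∧ G.Adj p.1 p.2} with hB
  have hinj : Function.Injective (Prod.map (Sum.inl : V → V ⊕ W) (Sum.inl : V → V ⊕ W)) := by
    rintro ⟨a, b⟩ ⟨c, d⟩ h
    simp only [Prod.map, Prod.mk.injEq, Sum.inl.injEq] at h
    simp [h.1, h.2]
  have hunion : A ∪ B = S ×ˢ Sᶜ := by
    ext ⟨a, b⟩
    simp only [Set.mem_union, Set.mem_prod, Set.mem_compl_iff, hA, hB, Set.mem_image,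
      Set.mem_setOf_eq]
    constructor
    · rintro (⟨h1, h2, _⟩ | ⟨⟨u, v⟩, ⟨hu, hv, _⟩, heq⟩)
      · exact ⟨h1, h2⟩
      · simp only [Prod.map, Prod.mk.injEq] at heq
        rw [← heq.1, ← heq.2]
        exact ⟨hu, hv⟩
    · rintro ⟨h1, h2⟩
      by_cases hadj : G'.Adj a b
      · exact Or.inl ⟨h1, h2, hadj⟩
      · right
        have hne : a ≠ b := fun h => h2 (h ▸ h1)
        have : ∃ u v, a = Sum.inl u ∧ b = Sum.inl v ∧ G.Adj u v := by
          by_contra hc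
          exact hadj (show (compJoinGraph G : SimpleGraph (V ⊕ W)).Adj a b from ⟨hne, hc⟩)
        obtain ⟨u, v, ha', hb', huv⟩ := this
        refine ⟨(u, v), ⟨?_, ?_, huv⟩, ?_⟩
        · simpa [hT, ← ha'] using h1
        · simpa [hT, ← hb'] using h2
        · simp [Prod.map, ha', hb']
  have hdisj : Disjoint A B := by
    rw [Set.disjoint_left]
    rintro ⟨a, b⟩ ⟨_, _, hadj⟩ ⟨⟨u, v⟩, ⟨_, _, huv⟩, heq⟩
    simp only [Prod.map, Prod.mk.injEq] at heq
    exact (show (compJoinGraph G : SimpleGraph (V ⊕ W)).Adj a b from hadj).2 ⟨u, v, heq.1.symm, heq.2.symm, huv⟩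
  have hcardB : B.ncard = cutCard G T := Set.ncard_image_of_injective _ hinj
  calc cutCard G' S + cutCard G T = A.ncard + B.ncard := by rw [hcardB]; rfl
    _ = (A ∪ B).ncard := (Set.ncard_union_eq hdisj (Set.toFinite _) (Set.toFinite _)).symm
    _ = (S ×ˢ Sᶜ).ncard := by rw [hunion]
    _ = S.ncard * Sᶜ.ncard := ncard_prod' _ _

theorem edgeExpansion_compJoinGraph_eq_maxcut' {V W : Type*} [Fintype V] [Fintype W]
    (G : SimpleGraph V) (hn : 1 ≤ Fintype.card V)
    (hW : Fintype.card W = Fintype.card V) :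
    sInf { r : ℝ | ∃ S : Set (V ⊕ W), S.Nonempty ∧ 2 * S.ncard ≤ Fintype.card (V ⊕ W) ∧
        r = (cutCard (compJoinGraph G : SimpleGraph (V ⊕ W)) S : ℝ) / (S.ncard : ℝ) } =
      (Fintype.card V : ℝ) -
        ((sSup {k : ℕ | ∃ S : Set V, k = cutCard G S} : ℕ) : ℝ) / (Fintype.card V : ℝ) := by
  classical
  set n := Fintype.card V with hn'
  have hcardVW : Fintype.card (V ⊕ W) = n + n := by
    rw [Fintype.card_sum, hW]
  set G' := (compJoinGraph G : SimpleGraph (V ⊕ W))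
  set Kset := {k : ℕ | ∃ S : Set V, k = cutCard G S} with hKset
  set M := sSup Kset with hM
  have hKne : Kset.Nonempty := ⟨cutCard G ∅, ∅, rfl⟩
  have hKbdd : BddAbove Kset := by
    refine ⟨n * n, ?_⟩
    rintro k ⟨S, rfl⟩
    calc cutCard G S ≤ S.ncard * n := cutCard_le G S
      _ ≤ n * n := by
          have : S.ncard ≤ n := by
            calc S.ncard ≤ (Set.univ : Set V).ncard :=
                  Set.ncard_le_ncard (Set.subset_univ S) (Set.toFinite _)
              _ = n := by rw [Set.ncard_univ, Nat.card_eq_fintype_card]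
          exact Nat.mul_le_mul_right n this
  -- the maximizer
  obtain ⟨T0, hT0⟩ : ∃ T : Set V, M = cutCard G T := Nat.sSup_mem hKne hKbdd
  have hMle : M ≤ n * n := by
    rw [hT0]
    calc cutCard G T0 ≤ T0.ncard * n := cutCard_le G T0
      _ ≤ n * n := Nat.mul_le_mul_right n (by
          calc T0.ncard ≤ (Set.univ : Set V).ncard :=
                Set.ncard_le_ncard (Set.subset_univ T0) (Set.toFinite _)
            _ = n := by rw [Set.ncard_univ, Nat.card_eq_fintype_card])
  have ht0 : T0.ncard ≤ n := by
    calc T0.ncard ≤ (Set.univ : Set V).ncard :=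
          Set.ncard_le_ncard (Set.subset_univ T0) (Set.toFinite _)
      _ = n := by rw [Set.ncard_univ, Nat.card_eq_fintype_card]
  -- padding subset of W
  obtain ⟨w, _, hw⟩ : ∃ w ⊆ (Set.univ : Set W), w.ncard = n - T0.ncard := by
    refine Set.exists_subset_card_eq ?_
    rw [Set.ncard_univ, Nat.card_eq_fintype_card, hW]
    omega
  set S0 : Set (V ⊕ W) := Sum.inl '' T0 ∪ Sum.inr '' w with hS0
  have hS0card : S0.ncard = n := by
    rw [hS0, Set.ncard_union_eq ?_ (Set.toFinite _) (Set.toFinite _),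
      Set.ncard_image_of_injective _ Sum.inl_injective,
      Set.ncard_image_of_injective _ Sum.inr_injective, hw]
    · omega
    · rw [Set.disjoint_left]
      rintro x ⟨u, _, rfl⟩ ⟨v, _, h⟩
      exact Sum.inl_ne_inr h.symm
  have hpre : Sum.inl ⁻¹' S0 = T0 := by
    ext u
    simp [hS0, Set.mem_preimage, Sum.inl_injective.mem_set_image]
  have hS0compl : S0ᶜ.ncard = n := by
    have := Set.ncard_add_ncard_compl S0 (Set.toFinite _) (Set.toFinite _)
    rw [hS0card, Nat.card_eq_fintype_card, hcardVW] at this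
    omega
  have hid0 : cutCard G' S0 + M = n * n := by
    have := cut_identity G S0
    rw [hpre, hS0card, hS0compl, ← hT0] at this
    exact this
  have hS0ne : S0.Nonempty :=
    (Set.ncard_pos (Set.toFinite S0)).mp (by rw [hS0card]; omega)
  have hnR : (0 : ℝ) < n := by exact_mod_cast hn
  have hmem : ((n : ℝ) - (M : ℝ) / n) ∈
      { r : ℝ | ∃ S : Set (V ⊕ W), S.Nonempty ∧ 2 * S.ncard ≤ Fintype.card (V ⊕ W) ∧
        r = (cutCard G' S : ℝ) / (S.ncard : ℝ) } := by
    refine ⟨S0, hS0ne, ?_, ?_⟩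
    · rw [hS0card, hcardVW]; omega
    · have hc : (cutCard G' S0 : ℝ) = n * n - M := by
        have := hid0
        have : (cutCard G' S0 : ℝ) + M = n * n := by exact_mod_cast congrArg (Nat.cast : ℕ → ℝ) this
        linarith
      rw [hS0card, hc]
      field_simp
  have hlb : ∀ r ∈ { r : ℝ | ∃ S : Set (V ⊕ W), S.Nonempty ∧ 2 * S.ncard ≤ Fintype.card (V ⊕ W) ∧
        r = (cutCard G' S : ℝ) / (S.ncard : ℝ) }, ((n : ℝ) - (M : ℝ) / n) ≤ r := by
    rintro r ⟨S, hne, hcard, rfl⟩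
    set s := S.ncard with hs
    set c := cutCard G (Sum.inl ⁻¹' S) with hc
    have hs0 : 0 < s := (Set.ncard_pos (Set.toFinite _)).mpr hne
    have hsn : s ≤ n := by rw [hcardVW] at hcard; omega
    have hcompl : Sᶜ.ncard = n + n - s := by
      have := Set.ncard_add_ncard_compl S (Set.toFinite _) (Set.toFinite _)
      rw [Nat.card_eq_fintype_card, hcardVW] at this
      omega
    have hid : cutCard G' S + c = s * (n + n - s) := by
      have := cut_identity G S
      rw [hcompl] at this
      exact this
    have hcM : c ≤ M := le_csSup hKbdd ⟨_, rfl⟩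
    have hcns : c ≤ s * n := by
      have h1 : (Sum.inl ⁻¹' S).ncard ≤ s := by
        calc (Sum.inl ⁻¹' S).ncard
            = (Sum.inl '' (Sum.inl ⁻¹' S) : Set (V ⊕ W)).ncard :=
              (Set.ncard_image_of_injective _ Sum.inl_injective).symm
          _ ≤ S.ncard := Set.ncard_le_ncard (Set.image_preimage_subset _ _) (Set.toFinite _)
      calc c ≤ (Sum.inl ⁻¹' S).ncard * n := cutCard_le G _
        _ ≤ s * n := Nat.mul_le_mul_right n h1
    -- move to the reals
    have hidR : (cutCard G' S : ℝ) + c = s * (2 * n - s) := by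
      have h2 : ((cutCard G' S + c : ℕ) : ℝ) = ((s * (n + n - s) : ℕ) : ℝ) := by
        exact_mod_cast congrArg (Nat.cast : ℕ → ℝ) hid
      push_cast [Nat.sub_add_cancel, hsn] at h2 ⊢
      rw [Nat.cast_sub (by omega : s ≤ n + n)] at h2
      push_cast at h2
      linarith
    have hsR : (0 : ℝ) < s := by exact_mod_cast hs0
    have hsnR : (s : ℝ) ≤ n := by exact_mod_cast hsn
    have hcMR : (c : ℝ) ≤ M := by exact_mod_cast hcM
    have hcnsR : (c : ℝ) ≤ s * n := by exact_mod_cast hcns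
    have heq : (n : ℝ) - (M : ℝ) / n = ((n : ℝ) * n - M) / n := by
      field_simp
    rw [heq, div_le_div_iff₀ hnR hsR]
    nlinarith [mul_nonneg (sub_nonneg.2 hsnR) (sub_nonneg.2 hcnsR),
      mul_nonneg (sub_nonneg.2 hcMR) hsR.le]
  exact le_antisymm (csInf_le ⟨_, hlb⟩ hmem) (le_csInf ⟨_, hmem⟩ hlb)

/-- Let `G = (V, E)` with `|V| = n ≥ 1`, and let `G'` be the graph
on `V ⊎ W`, `|W| = n`, whose edges are exactly all pairs of distinct nodes not in
`E`. Then `h(G') = n − (max{|δ_G(S)| : S ⊆ V})/n`. -/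
theorem edgeExpansion_compJoinGraph_eq_maxcut {V W : Type*} [Fintype V] [Fintype W]
    (G : SimpleGraph V) (hn : 1 ≤ Fintype.card V)
    (hW : Fintype.card W = Fintype.card V) :
    edgeExpansion (compJoinGraph G : SimpleGraph (V ⊕ W)) =
      (Fintype.card V : ℝ) -
        ((sSup {k : ℕ | ∃ S : Set V, k = cutCard G S} : ℕ) : ℝ) / (Fintype.card V : ℝ) := by
  exact edgeExpansion_compJoinGraph_eq_maxcut' G hn hW
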